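/- arXiv:2603.16632 — 3 statements merged into one kernel-verified Lean document; each statement's English description precedes it below -/
import Mathlib

section
/- (Complex S-procedure.) Let n be a positive natural number, let A₁, A₂ be Hermitian n×n complex matrices, b₁, b₂ ∈ ℂⁿ, and c₁, c₂ ∈ ℝ. For i = 1, 2 define the real-valued quadratic function hᵢ(x) = Re(xᴴ Aᵢ x) + 2·Re(bᵢᴴ x) + cᵢ for x ∈ ℂⁿ. Assume the Slater condition: there exists x₀ ∈ ℂⁿ with h₁(x₀) < 0. Then the following two statements are equivalent: (i) for every x ∈ ℂⁿ, h₁(x) ≤ 0 implies h₂(x) ≤ 0; (ii) there exists a real number α ≥ 0 such that the (n+1)×(n+1) Hermitian block matrix α·[[A₁, b₁],[b₁ᴴ, c₁]] − [[A₂, b₂],[b₂ᴴ, c₂]] is positive semidefinite. -/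
open Matrix ComplexOrder

/-- The real-valued quadratic function `h(x) = xᴴ A x + bᴴ x + xᴴ b + c
= Re(xᴴ A x) + 2·Re(bᴴ x) + c` associated with a Hermitian matrix `A`,
a vector `b`, and a real scalar `c`. -/
noncomputable def quadFun {n : ℕ} (A : Matrix (Fin n) (Fin n) ℂ) (b : Fin n → ℂ) (c : ℝ)
    (x : Fin n → ℂ) : ℝ :=
  (star x ⬝ᵥ A.mulVec x).re + 2 * (star b ⬝ᵥ x).re + c

/-- The Hermitian `(n+1)×(n+1)` block matrix `[[A, b], [bᴴ, c]]`. -/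
noncomputable def hermBlock {n : ℕ} (A : Matrix (Fin n) (Fin n) ℂ) (b : Fin n → ℂ) (c : ℝ) :
    Matrix (Fin n ⊕ Unit) (Fin n ⊕ Unit) ℂ :=
  Matrix.fromBlocks A (Matrix.replicateCol Unit b) (Matrix.replicateRow Unit (star b))
    (Matrix.of fun _ _ => (c : ℂ))

namespace SProcAux


variable {m : Type*} [Fintype m]

noncomputable def Q (M : Matrix m m ℂ) (z : m → ℂ) : ℂ := star z ⬝ᵥ M *ᵥ z

lemma Q_smul (M : Matrix m m ℂ) (a : ℂ) (z : m → ℂ) :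
    Q M (a • z) = star a * a * Q M z := by
  simp only [Q, star_smul, smul_dotProduct, mulVec_smul, dotProduct_smul, smul_eq_mul]
  ring

lemma Q_add (M : Matrix m m ℂ) (u v : m → ℂ) :
    Q M (u + v) = Q M u + Q M v + (star u ⬝ᵥ M *ᵥ v) + (star v ⬝ᵥ M *ᵥ u) := by
  simp only [Q, star_add, add_dotProduct, mulVec_add, dotProduct_add]
  ring

lemma n2_smul (a : ℂ) (z : m → ℂ) :
    star (a • z) ⬝ᵥ (a • z) = star a * a * (star z ⬝ᵥ z) := by
  simp only [star_smul, smul_dotProduct, dotProduct_smul, smul_eq_mul]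
  ring

lemma n2_add (u v : m → ℂ) :
    star (u + v) ⬝ᵥ (u + v) = star u ⬝ᵥ u + star v ⬝ᵥ v + star u ⬝ᵥ v + star v ⬝ᵥ u := by
  simp only [star_add, add_dotProduct, dotProduct_add]
  ring

lemma th_core_aux (M : Matrix m m ℂ) (x y : m → ℂ)
    (hx : star x ⬝ᵥ x = 1) (hy : star y ⬝ᵥ y = 1)
    (hqx : Q M x = 0) (hqy : Q M y = 1)
    (hsim : (star x ⬝ᵥ M *ᵥ y + star y ⬝ᵥ M *ᵥ x).im = 0)
    {μ : ℝ} (hμ0 : 0 ≤ μ) (hμ1 : μ ≤ 1) :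
    ∃ z : m → ℂ, star z ⬝ᵥ z = 1 ∧ Q M z = (μ : ℂ) := by
  classical
  set s : ℂ := star x ⬝ᵥ M *ᵥ y + star y ⬝ᵥ M *ᵥ x with hs
  have hs_real : s = ((s.re : ℝ) : ℂ) := Complex.ext rfl (by simpa using hsim)
  set s₀ : ℂ := star x ⬝ᵥ y + star y ⬝ᵥ x with hs₀
  have hs₀im : s₀.im = 0 := by
    have h1 : star y ⬝ᵥ x = star (star x ⬝ᵥ y) := star_dotProduct _ _
    rw [hs₀, h1]
    simp [Complex.add_im]
  have hs₀_real : s₀ = ((s₀.re : ℝ) : ℂ) := Complex.ext rfl (by simpa using hs₀im)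
  set z : ℝ → (m → ℂ) := fun t => ((t : ℂ)) • x + (((1 - t : ℝ) : ℂ)) • y with hz
  have hQz : ∀ t : ℝ, Q M (z t) =
      (((1 - t) ^ 2 : ℝ) : ℂ) + ((t * (1 - t) : ℝ) : ℂ) * s := by
    intro t
    rw [hz]
    simp only
    rw [Q_add, Q_smul, Q_smul, hqx, hqy]
    simp only [star_smul, smul_dotProduct, mulVec_smul, dotProduct_smul, smul_eq_mul,
      Complex.star_def, Complex.conj_ofReal]
    rw [hs]
    push_cast
    ring
  have hNz : ∀ t : ℝ, star (z t) ⬝ᵥ (z t) =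
      ((t ^ 2 + (1 - t) ^ 2 : ℝ) : ℂ) + ((t * (1 - t) : ℝ) : ℂ) * s₀ := by
    intro t
    rw [hz]
    simp only
    rw [n2_add, n2_smul, n2_smul, hx, hy]
    simp only [star_smul, smul_dotProduct, dotProduct_smul, smul_eq_mul,
      Complex.star_def, Complex.conj_ofReal]
    rw [hs₀]
    push_cast
    ring
  have hzne : ∀ t : ℝ, z t ≠ 0 := by
    intro t h0
    have h1 : ((t : ℂ)) • x = (-(((1 - t : ℝ) : ℂ))) • y := by
      rw [neg_smul]
      exact eq_neg_of_add_eq_zero_left h0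
    have h2 : Q M (((t : ℂ)) • x) = Q M ((-(((1 - t : ℝ) : ℂ))) • y) := by rw [h1]
    rw [Q_smul, Q_smul, hqx, hqy] at h2
    simp only [mul_zero, mul_one, star_neg, Complex.star_def, Complex.conj_ofReal,
      neg_mul, mul_neg, neg_neg] at h2
    have h3 : ((1 - t : ℝ) : ℂ) * ((1 - t : ℝ) : ℂ) = 0 := by rw [← h2]
    have h4 : (1 - t : ℝ) = 0 := by
      have := mul_self_eq_zero.mp h3
      exact_mod_cast this
    have ht1 : t = 1 := by linarith
    have h5 : star (z t) ⬝ᵥ (z t) = 0 := by rw [h0]; simp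
    rw [hNz t, ht1] at h5
    simp at h5
  set num : ℝ → ℝ := fun t => (1 - t) ^ 2 + t * (1 - t) * s.re with hnum
  set den : ℝ → ℝ := fun t => t ^ 2 + (1 - t) ^ 2 + t * (1 - t) * s₀.re with hden
  have hQre : ∀ t : ℝ, Q M (z t) = ((num t : ℝ) : ℂ) := by
    intro t
    rw [hQz t, hs_real, hnum]
    push_cast
    ring
  have hNre : ∀ t : ℝ, star (z t) ⬝ᵥ (z t) = ((den t : ℝ) : ℂ) := by
    intro t
    rw [hNz t, hs₀_real, hden]
    push_cast
    ring
  have hden_pos : ∀ t : ℝ, 0 < den t := by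
    intro t
    have h1 : (0:ℂ) < star (z t) ⬝ᵥ (z t) := dotProduct_star_self_pos_iff.mpr (hzne t)
    rw [hNre t] at h1
    rw [Complex.lt_def] at h1
    simpa using h1.1
  set φ : ℝ → ℝ := fun t => num t / den t with hφ
  have hφc : Continuous φ := by
    apply Continuous.div
    · fun_prop
    · fun_prop
    · intro t
      exact (hden_pos t).ne'
  have hφ0 : φ 0 = 1 := by simp [hφ, hnum, hden]
  have hφ1 : φ 1 = 0 := by simp [hφ, hnum, hden]
  have hIVT := intermediate_value_Icc' (le_of_lt one_pos) hφc.continuousOn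
  rw [hφ1, hφ0] at hIVT
  obtain ⟨t, _, hφt⟩ := hIVT ⟨hμ0, hμ1⟩
  have hDpos : 0 < den t := hden_pos t
  set a : ℂ := Complex.ofReal (Real.sqrt (den t))⁻¹ with ha
  have haa : star a * a = (((den t)⁻¹ : ℝ) : ℂ) := by
    rw [ha]
    simp only [Complex.star_def, Complex.conj_ofReal]
    rw [← Complex.ofReal_mul]
    congr 1
    rw [← mul_inv]
    congr 1
    exact Real.mul_self_sqrt hDpos.le
  refine ⟨a • z t, ?_, ?_⟩
  · rw [n2_smul, haa, hNre t, ← Complex.ofReal_mul, inv_mul_cancel₀ hDpos.ne']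
    simp
  · rw [Q_smul, haa, hQre t, ← Complex.ofReal_mul, ← hφt]
    congr 1
    rw [hφ]
    field_simp

/-- Toeplitz–Hausdorff core -/
lemma th_core (M : Matrix m m ℂ) (x y : m → ℂ)
    (hx : star x ⬝ᵥ x = 1) (hy : star y ⬝ᵥ y = 1)
    (hqx : Q M x = 0) (hqy : Q M y = 1)
    {μ : ℝ} (hμ0 : 0 ≤ μ) (hμ1 : μ ≤ 1) :
    ∃ z : m → ℂ, star z ⬝ᵥ z = 1 ∧ Q M z = (μ : ℂ) := by
  classical
  set p : ℂ := star x ⬝ᵥ M *ᵥ y with hp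
  set r : ℂ := star y ⬝ᵥ M *ᵥ x with hr
  set d : ℂ := r - star p with hd
  obtain ⟨c, hc1, hcim⟩ : ∃ c : ℂ, star c * c = 1 ∧ (star c * p + c * r).im = 0 := by
    have key : ∀ c : ℂ, (star c * p + c * r).im = (c * d).im := by
      intro c
      have h1 : star c * p = star (c * star p) := by
        rw [star_mul', star_star]
      rw [h1, hd, mul_sub]
      simp only [Complex.star_def, Complex.conj_im, Complex.add_im, Complex.sub_im]
      ring
    by_cases hd0 : d = 0
    · exact ⟨1, by simp, by rw [key]; simp [hd0]⟩
    · set ad : ℝ := ‖d‖ with had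
      have hadpos : 0 < ad := by
        rw [had]
        exact norm_pos_iff.mpr hd0
      have hdd : d * star d = ((ad ^ 2 : ℝ) : ℂ) := by
        rw [Complex.star_def, Complex.mul_conj, had]
        norm_cast
        exact (Complex.sq_norm d).symm
      refine ⟨star d / (ad : ℂ), ?_, ?_⟩
      · rw [star_div₀, star_star]
        have hadne : ((ad : ℝ) : ℂ) ≠ 0 := by
          exact_mod_cast hadpos.ne'
        have hstar_ad : star ((ad : ℝ) : ℂ) = ((ad : ℝ) : ℂ) := by
          rw [Complex.star_def, Complex.conj_ofReal]
        rw [hstar_ad, div_mul_div_comm, hdd]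
        rw [div_eq_one_iff_eq (by exact mul_ne_zero hadne hadne)]
        push_cast
        ring
      · rw [key]
        have : star d / (ad : ℂ) * d = ((ad ^ 2 / ad : ℝ) : ℂ) := by
          rw [div_mul_eq_mul_div, mul_comm, hdd]
          push_cast
          ring
        rw [this]
        exact Complex.ofReal_im _
  have hnx' : star (c • x) ⬝ᵥ (c • x) = 1 := by rw [n2_smul, hx, mul_one, hc1]
  have hqx' : Q M (c • x) = 0 := by rw [Q_smul, hqx, mul_zero]
  have hsim : (star (c • x) ⬝ᵥ M *ᵥ y + star y ⬝ᵥ M *ᵥ (c • x)).im = 0 := by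
    simp only [star_smul, smul_dotProduct, mulVec_smul, dotProduct_smul, smul_eq_mul]
    rw [← hp, ← hr]
    exact hcim
  exact th_core_aux M (c • x) y hnx' hy hqx' hqy hsim hμ0 hμ1

lemma Q_zero (M : Matrix m m ℂ) : Q M (0 : m → ℂ) = 0 := by simp [Q]

lemma norm2_real (z : m → ℂ) : star z ⬝ᵥ z = (((star z ⬝ᵥ z).re : ℝ) : ℂ) := by
  have h0 : (0:ℂ) ≤ star z ⬝ᵥ z := dotProduct_star_self_nonneg z
  rw [Complex.le_def] at h0
  exact (Complex.ext (by simp) (by simp [h0.2.symm])).symm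

lemma norm2_re_pos (z : m → ℂ) (hz : z ≠ 0) : 0 < (star z ⬝ᵥ z).re := by
  have h1 : (0:ℂ) < star z ⬝ᵥ z := dotProduct_star_self_pos_iff.mpr hz
  rw [Complex.lt_def] at h1
  simpa using h1.1

lemma Q_sqrt_smul (M : Matrix m m ℂ) (t : m → ℂ) {ρ : ℝ} (hρ : 0 ≤ ρ) :
    Q M ((Complex.ofReal (Real.sqrt ρ)) • t) = ((ρ : ℝ) : ℂ) * Q M t := by
  rw [Q_smul]
  congr 1
  rw [Complex.star_def, Complex.conj_ofReal, ← Complex.ofReal_mul,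
    Real.mul_self_sqrt hρ]

lemma n2_sqrt_smul (t : m → ℂ) {ρ : ℝ} (hρ : 0 ≤ ρ) :
    star ((Complex.ofReal (Real.sqrt ρ)) • t) ⬝ᵥ ((Complex.ofReal (Real.sqrt ρ)) • t)
      = ((ρ : ℝ) : ℂ) * (star t ⬝ᵥ t) := by
  rw [n2_smul]
  congr 1
  rw [Complex.star_def, Complex.conj_ofReal, ← Complex.ofReal_mul,
    Real.mul_self_sqrt hρ]

lemma Q_matsmul (e : ℂ) (N : Matrix m m ℂ) (t : m → ℂ) : Q (e • N) t = e * Q N t := by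
  simp [Q, smul_mulVec]

lemma Q_matsub (N P : Matrix m m ℂ) (t : m → ℂ) : Q (N - P) t = Q N t - Q P t := by
  simp [Q, sub_mulVec]

lemma Q_smul_one [DecidableEq m] (d : ℂ) (t : m → ℂ) :
    Q (d • (1 : Matrix m m ℂ)) t = d * (star t ⬝ᵥ t) := by
  simp [Q, smul_mulVec, one_mulVec]

/-- Convexity of the unnormalized joint numerical range (image of `Q M`). -/
lemma Q_range_convex [DecidableEq m] (M : Matrix m m ℂ) (z w : m → ℂ) {a b : ℝ}
    (ha : 0 ≤ a) (hb : 0 ≤ b) (hab : a + b = 1) :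
    ∃ v : m → ℂ, Q M v = (a : ℂ) * Q M z + (b : ℂ) * Q M w := by
  by_cases hz0 : z = 0
  · refine ⟨(Complex.ofReal (Real.sqrt b)) • w, ?_⟩
    rw [Q_sqrt_smul M w hb, hz0, Q_zero, mul_zero, zero_add]
  by_cases hw0 : w = 0
  · refine ⟨(Complex.ofReal (Real.sqrt a)) • z, ?_⟩
    rw [Q_sqrt_smul M z ha, hw0, Q_zero, mul_zero, add_zero]
  set nz : ℝ := (star z ⬝ᵥ z).re with hnz
  set nw : ℝ := (star w ⬝ᵥ w).re with hnw
  have hnzpos : 0 < nz := norm2_re_pos z hz0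
  have hnwpos : 0 < nw := norm2_re_pos w hw0
  -- normalized vectors
  set u : m → ℂ := (Complex.ofReal (Real.sqrt nz⁻¹)) • z with hu
  set v' : m → ℂ := (Complex.ofReal (Real.sqrt nw⁻¹)) • w with hv'
  have hun : star u ⬝ᵥ u = 1 := by
    rw [hu, n2_sqrt_smul z (by positivity), norm2_real z, ← hnz,
      ← Complex.ofReal_mul, inv_mul_cancel₀ hnzpos.ne']
    simp
  have hvn : star v' ⬝ᵥ v' = 1 := by
    rw [hv', n2_sqrt_smul w (by positivity), norm2_real w, ← hnw,
      ← Complex.ofReal_mul, inv_mul_cancel₀ hnwpos.ne']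
    simp
  have hQu : Q M z = ((nz : ℝ) : ℂ) * Q M u := by
    rw [hu, Q_sqrt_smul M z (by positivity), ← mul_assoc, ← Complex.ofReal_mul,
      mul_inv_cancel₀ hnzpos.ne']
    simp
  have hQv : Q M w = ((nw : ℝ) : ℂ) * Q M v' := by
    rw [hv', Q_sqrt_smul M w (by positivity), ← mul_assoc, ← Complex.ofReal_mul,
      mul_inv_cancel₀ hnwpos.ne']
    simp
  set r : ℝ := a * nz + b * nw with hrr
  have hrpos : 0 < r := by
    rcases (show 0 < a ∨ 0 < b by rcases ha.lt_or_eq with h | h; · exact Or.inl h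
                                  · right; rw [← h] at hab; linarith) with h | h
    · have : 0 < a * nz := by positivity
      nlinarith [mul_nonneg hb hnwpos.le]
    · have : 0 < b * nw := by positivity
      nlinarith [mul_nonneg ha hnzpos.le]
  by_cases hQeq : Q M u = Q M v'
  · refine ⟨(Complex.ofReal (Real.sqrt r)) • u, ?_⟩
    rw [Q_sqrt_smul M u hrpos.le, hQu, hQv, ← hQeq, hrr]
    push_cast
    ring
  · -- use th_core on normalized matrix
    set e : ℂ := (Q M v' - Q M u)⁻¹ with he
    have hene : Q M v' - Q M u ≠ 0 := sub_ne_zero.mpr (Ne.symm hQeq)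
    set M' : Matrix m m ℂ := e • (M - (Q M u) • (1 : Matrix m m ℂ)) with hM'
    have hQM' : ∀ t : m → ℂ, star t ⬝ᵥ t = 1 → Q M' t = e * (Q M t - Q M u) := by
      intro t ht
      rw [hM', Q_matsmul, Q_matsub, Q_smul_one, ht, mul_one]
    have hqu' : Q M' u = 0 := by rw [hQM' u hun, sub_self, mul_zero]
    have hqv' : Q M' v' = 1 := by
      rw [hQM' v' hvn, he, inv_mul_cancel₀ hene]
    set μ : ℝ := b * nw / r with hμ
    have hμ0 : 0 ≤ μ := by positivity
    have hμ1 : μ ≤ 1 := by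
      rw [hμ, div_le_one hrpos]
      nlinarith [mul_nonneg ha hnzpos.le]
    obtain ⟨t, htn, htq⟩ := th_core M' u v' hun hvn hqu' hqv' hμ0 hμ1
    have hQt : Q M t = Q M u + (μ : ℂ) * (Q M v' - Q M u) := by
      have h1 : e * (Q M t - Q M u) = (μ : ℂ) := by rw [← hQM' t htn, htq]
      have h2 : Q M t - Q M u = (μ : ℂ) * (Q M v' - Q M u) := by
        rw [he] at h1
        field_simp at h1
        linear_combination h1
      linear_combination h2
    refine ⟨(Complex.ofReal (Real.sqrt r)) • t, ?_⟩
    rw [Q_sqrt_smul M t hrpos.le, hQt, hQu, hQv]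
    have hrc : ((r : ℝ) : ℂ) = (a : ℂ) * (nz : ℂ) + (b : ℂ) * (nw : ℂ) := by
      rw [hrr]; push_cast; ring
    have hμr : ((μ : ℝ) : ℂ) * ((r : ℝ) : ℂ) = (b : ℂ) * (nw : ℂ) := by
      rw [← Complex.ofReal_mul, hμ, div_mul_cancel₀ _ hrpos.ne']
      push_cast; ring
    linear_combination (Q M u) * hrc + (Q M v' - Q M u) * hμr



variable {n : ℕ}

lemma sum_elim_eq (z : Fin n ⊕ Unit → ℂ) :
    z = Sum.elim (z ∘ Sum.inl) (fun _ => z (Sum.inr ())) := by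
  funext i
  rcases i with i | u
  · rfl
  · cases u; rfl

lemma Q_hermBlock (A : Matrix (Fin n) (Fin n) ℂ) (b : Fin n → ℂ) (c : ℝ)
    (z : Fin n ⊕ Unit → ℂ) :
    Q (hermBlock A b c) z =
      star (z ∘ Sum.inl) ⬝ᵥ A *ᵥ (z ∘ Sum.inl)
        + z (Sum.inr ()) * (star (z ∘ Sum.inl) ⬝ᵥ b)
        + star (z (Sum.inr ())) * (star b ⬝ᵥ (z ∘ Sum.inl))
        + star (z (Sum.inr ())) * z (Sum.inr ()) * (c : ℂ) := by
  set x := z ∘ Sum.inl with hx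
  set t := z (Sum.inr ()) with ht
  have hz : z = Sum.elim x (fun _ => t) := sum_elim_eq z
  rw [Q, hz]
  rw [hermBlock, fromBlocks_mulVec]
  have hstar : star (Sum.elim x (fun _ : Unit => t)) =
      Sum.elim (star x) (fun _ : Unit => star t) := by
    funext i; rcases i with i | u <;> rfl
  rw [hstar, Sum.elim_comp_inl, Sum.elim_comp_inr, sumElim_dotProduct_sumElim]
  have h1 : (replicateCol Unit b *ᵥ fun _ : Unit => t) = t • b := by
    funext i
    simp only [mulVec, dotProduct, Matrix.replicateCol_apply, Fintype.univ_punit,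
      Finset.sum_singleton, Pi.smul_apply, smul_eq_mul]
    ring
  have h2 : star x ⬝ᵥ (A *ᵥ x + t • b) = star x ⬝ᵥ A *ᵥ x + t * (star x ⬝ᵥ b) := by
    rw [dotProduct_add, dotProduct_smul, smul_eq_mul]
  have h3 : ∀ w : Unit → ℂ, (fun _ : Unit => star t) ⬝ᵥ w = star t * w () := by
    intro w
    simp [dotProduct]
  rw [h1, h2, h3]
  have h4 : (replicateRow Unit (star b) *ᵥ x + (of fun _ _ : Unit => (c:ℂ)) *ᵥ fun _ : Unit => t) ()
      = (star b ⬝ᵥ x) + (c : ℂ) * t := by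
    simp only [Pi.add_apply]
    congr 1
    · simp [mulVec, dotProduct, Matrix.replicateRow_apply]
  rw [h4]
  ring


lemma re_conj_dot (u v : Fin n → ℂ) : (star u ⬝ᵥ v).re = (star v ⬝ᵥ u).re := by
  rw [star_dotProduct (v := u) (w := v)]
  simp [Complex.star_def]

lemma Q_hermBlock_scaled (A : Matrix (Fin n) (Fin n) ℂ) (b : Fin n → ℂ) (c : ℝ)
    (y : Fin n → ℂ) (t : ℂ) :
    (Q (hermBlock A b c) (Sum.elim (t • y) (fun _ => t))).re
      = Complex.normSq t * quadFun A b c y := by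
  rw [Q_hermBlock]
  simp only [Sum.elim_comp_inl, Sum.elim_inr]
  have e1 : star (t • y) ⬝ᵥ A *ᵥ (t • y) = star t * t * (star y ⬝ᵥ A *ᵥ y) := by
    simp only [star_smul, smul_dotProduct, mulVec_smul, dotProduct_smul, smul_eq_mul]
    ring
  have e2 : star (t • y) ⬝ᵥ b = star t * (star y ⬝ᵥ b) := by
    simp only [star_smul, smul_dotProduct, smul_eq_mul]
  have e3 : star b ⬝ᵥ (t • y) = t * (star b ⬝ᵥ y) := by
    rw [dotProduct_smul, smul_eq_mul]
  rw [e1, e2, e3]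
  have e4 : star t * t = ((Complex.normSq t : ℝ) : ℂ) := by
    rw [Complex.star_def, Complex.normSq_eq_conj_mul_self]
  have goal_eq : star t * t * (star y ⬝ᵥ A *ᵥ y) + t * (star t * (star y ⬝ᵥ b))
      + star t * (t * (star b ⬝ᵥ y)) + star t * t * (c : ℂ)
      = ((Complex.normSq t : ℝ) : ℂ) *
          ((star y ⬝ᵥ A *ᵥ y) + (star y ⬝ᵥ b) + (star b ⬝ᵥ y) + (c : ℂ)) := by
    rw [← e4]
    ring
  rw [goal_eq, Complex.re_ofReal_mul, quadFun]
  simp only [Complex.add_re, Complex.ofReal_re]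
  have := re_conj_dot y b
  have h2 : (star y ⬝ᵥ b).re = (star b ⬝ᵥ y).re := re_conj_dot y b
  rw [h2]
  ring

lemma Q_hermBlock_t0 (A : Matrix (Fin n) (Fin n) ℂ) (b : Fin n → ℂ) (c : ℝ)
    (z : Fin n ⊕ Unit → ℂ) (h : z (Sum.inr ()) = 0) :
    (Q (hermBlock A b c) z).re = (star (z ∘ Sum.inl) ⬝ᵥ A *ᵥ (z ∘ Sum.inl)).re := by
  rw [Q_hermBlock, h]
  simp

lemma Q_hermBlock_one (A : Matrix (Fin n) (Fin n) ℂ) (b : Fin n → ℂ) (c : ℝ)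
    (x : Fin n → ℂ) :
    (Q (hermBlock A b c) (Sum.elim x (fun _ => (1:ℂ)))).re = quadFun A b c x := by
  have := Q_hermBlock_scaled A b c x 1
  rw [one_smul] at this
  rw [this, Complex.normSq_one, one_mul]

lemma quadFun_real_smul (A : Matrix (Fin n) (Fin n) ℂ) (b : Fin n → ℂ) (c : ℝ)
    (x : Fin n → ℂ) (s : ℝ) :
    quadFun A b c (((s : ℝ) : ℂ) • x)
      = s ^ 2 * (star x ⬝ᵥ A *ᵥ x).re + 2 * (s * (star b ⬝ᵥ x).re) + c := by
  rw [quadFun]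
  have e1 : star (((s:ℝ):ℂ) • x) ⬝ᵥ A *ᵥ (((s:ℝ):ℂ) • x)
      = ((s^2 : ℝ) : ℂ) * (star x ⬝ᵥ A *ᵥ x) := by
    simp only [star_smul, smul_dotProduct, mulVec_smul, dotProduct_smul, smul_eq_mul,
      Complex.star_def, Complex.conj_ofReal]
    push_cast
    ring
  have e2 : star b ⬝ᵥ (((s:ℝ):ℂ) • x) = ((s:ℝ):ℂ) * (star b ⬝ᵥ x) := by
    rw [dotProduct_smul, smul_eq_mul]
  rw [e1, e2, Complex.re_ofReal_mul, Complex.re_ofReal_mul]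

lemma hermBlock_isHermitian {A : Matrix (Fin n) (Fin n) ℂ} (hA : A.IsHermitian)
    (b : Fin n → ℂ) (c : ℝ) : (hermBlock A b c).IsHermitian := by
  rw [Matrix.IsHermitian, hermBlock, fromBlocks_conjTranspose, conjTranspose_replicateCol,
    conjTranspose_replicateRow, star_star, hA.eq]
  have hc : (Matrix.of fun _ _ : Unit => (c:ℂ))ᴴ = Matrix.of fun _ _ : Unit => (c:ℂ) := by
    ext u v
    simp [Matrix.conjTranspose_apply, Complex.conj_ofReal]
  rw [hc]


lemma Q_herm_real {m : Type*} [Fintype m] {M : Matrix m m ℂ} (h : M.IsHermitian) (z : m → ℂ) :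
    Q M z = ((Q M z).re : ℂ) := by
  have hs : star (Q M z) = Q M z := by
    unfold Q
    conv_lhs => rw [← star_dotProduct, star_mulVec, h.eq, ← dotProduct_mulVec]
  exact (Complex.conj_eq_iff_re.mp hs).symm

lemma Q_mat_add {m : Type*} [Fintype m] (N P : Matrix m m ℂ) (t : m → ℂ) :
    Q (N + P) t = Q N t + Q P t := by
  simp [Q, add_mulVec]

/-- joint numerical range of two Hermitian forms is convex -/
lemma pair_range_convex {m : Type*} [Fintype m] [DecidableEq m] (M₁ M₂ : Matrix m m ℂ)
    (h₁ : M₁.IsHermitian) (h₂ : M₂.IsHermitian) :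
    Convex ℝ {p : ℝ × ℝ | ∃ z : m → ℂ, p = ((Q M₁ z).re, (Q M₂ z).re)} := by
  rintro p ⟨z, rfl⟩ q ⟨w, rfl⟩ a b ha hb hab
  obtain ⟨v, hv⟩ := Q_range_convex (M₁ + Complex.I • M₂) z w ha hb hab
  have hQC : ∀ u : m → ℂ, Q (M₁ + Complex.I • M₂) u
      = (((Q M₁ u).re : ℝ) : ℂ) + Complex.I * (((Q M₂ u).re : ℝ) : ℂ) := by
    intro u
    rw [Q_mat_add, Q_matsmul, ← Q_herm_real h₁, ← Q_herm_real h₂]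
  have hre : ∀ u : m → ℂ, (Q (M₁ + Complex.I • M₂) u).re = (Q M₁ u).re := by
    intro u; rw [hQC u]; simp
  have him : ∀ u : m → ℂ, (Q (M₁ + Complex.I • M₂) u).im = (Q M₂ u).re := by
    intro u; rw [hQC u]; simp
  refine ⟨v, ?_⟩
  have h1 : (Q M₁ v).re = a * (Q M₁ z).re + b * (Q M₁ w).re := by
    rw [← hre v, hv]
    simp only [Complex.add_re, Complex.re_ofReal_mul, hre]
  have h2 : (Q M₂ v).re = a * (Q M₂ z).re + b * (Q M₂ w).re := by
    rw [← him v, hv]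
    simp only [Complex.add_im, Complex.im_ofReal_mul, him]
  ext
  · simp [h1]
  · simp [h2]

lemma real_smul_mat {m : Type*} [Fintype m] (α : ℝ) (M : Matrix m m ℂ) :
    α • M = ((α : ℝ) : ℂ) • M := by
  ext i j
  simp [Complex.real_smul]

end SProcAux

open SProcAux

/-- Lemma 2 of the paper (complex S-procedure): under the Slater condition,
`h₁(x) ≤ 0 ⟹ h₂(x) ≤ 0` for all `x` iff there exists `α ≥ 0` with
`α·[[A₁,b₁],[b₁ᴴ,c₁]] − [[A₂,b₂],[b₂ᴴ,c₂]] ⪰ 0`. -/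
theorem s_procedure {n : ℕ} (hn : 0 < n)
    (A₁ A₂ : Matrix (Fin n) (Fin n) ℂ) (hA₁ : A₁.IsHermitian) (hA₂ : A₂.IsHermitian)
    (b₁ b₂ : Fin n → ℂ) (c₁ c₂ : ℝ)
    (slater : ∃ x₀ : Fin n → ℂ, quadFun A₁ b₁ c₁ x₀ < 0) :
    (∀ x : Fin n → ℂ, quadFun A₁ b₁ c₁ x ≤ 0 → quadFun A₂ b₂ c₂ x ≤ 0) ↔
      ∃ α : ℝ, 0 ≤ α ∧
        (α • hermBlock A₁ b₁ c₁ - hermBlock A₂ b₂ c₂).PosSemidef := by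
  have hM₁ : (hermBlock A₁ b₁ c₁).IsHermitian := hermBlock_isHermitian hA₁ b₁ c₁
  have hM₂ : (hermBlock A₂ b₂ c₂).IsHermitian := hermBlock_isHermitian hA₂ b₂ c₂
  set M₁ := hermBlock A₁ b₁ c₁ with hM₁def
  set M₂ := hermBlock A₂ b₂ c₂ with hM₂def
  -- quadratic form of the combination
  have hQD : ∀ (α : ℝ) (v : Fin n ⊕ Unit → ℂ),
      Q (α • M₁ - M₂) v = ((α : ℝ) : ℂ) * Q M₁ v - Q M₂ v := by
    intro α v
    rw [real_smul_mat, Q_matsub, Q_matsmul]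
  have hDherm : ∀ α : ℝ, (α • M₁ - M₂).IsHermitian := by
    intro α
    rw [real_smul_mat]
    unfold Matrix.IsHermitian
    rw [conjTranspose_sub, conjTranspose_smul, hM₁.eq, hM₂.eq, Complex.star_def,
      Complex.conj_ofReal]
  constructor
  · intro hyp
    -- the homogeneous implication
    have hkey : ∀ z : Fin n ⊕ Unit → ℂ, (Q M₁ z).re < 0 → (Q M₂ z).re ≤ 0 := by
      intro z hgz
      by_cases ht : z (Sum.inr ()) = 0
      · set x : Fin n → ℂ := z ∘ Sum.inl with hx
        rw [Q_hermBlock_t0 A₁ b₁ c₁ z ht] at hgz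
        rw [Q_hermBlock_t0 A₂ b₂ c₂ z ht]
        set a₁ : ℝ := (star x ⬝ᵥ A₁ *ᵥ x).re with ha₁
        set a₂ : ℝ := (star x ⬝ᵥ A₂ *ᵥ x).re with ha₂
        set β₁ : ℝ := (star b₁ ⬝ᵥ x).re with hβ₁
        set β₂ : ℝ := (star b₂ ⬝ᵥ x).re with hβ₂
        by_contra hcon
        push_neg at hcon
        set s : ℝ := max 1 (max ((2*|β₁| + |c₁| + 1)/(-a₁)) ((2*|β₂| + |c₂| + 1)/a₂)) with hs
        have hs1 : 1 ≤ s := le_max_left _ _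
        have hspos : 0 < s := lt_of_lt_of_le one_pos hs1
        have hs2 : (2*|β₁| + |c₁| + 1) ≤ s * (-a₁) := by
          have h : (2*|β₁| + |c₁| + 1)/(-a₁) ≤ s := by
            rw [hs]
            exact le_trans (le_max_left _ _) (le_max_right _ _)
          rw [div_le_iff₀ (by linarith : (0:ℝ) < -a₁)] at h
          linarith [h]
        have hs3 : (2*|β₂| + |c₂| + 1) ≤ s * a₂ := by
          have h : (2*|β₂| + |c₂| + 1)/a₂ ≤ s := by
            rw [hs]
            exact le_trans (le_max_right _ _) (le_max_right _ _)
          rw [div_le_iff₀ hcon] at h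
          linarith [h]
        have hneg : quadFun A₁ b₁ c₁ (((s:ℝ):ℂ) • x) < 0 := by
          rw [quadFun_real_smul, ← ha₁, ← hβ₁]
          nlinarith [le_abs_self β₁, neg_abs_le β₁, le_abs_self c₁, neg_abs_le c₁,
            mul_le_mul_of_nonneg_left hs2 hspos.le, abs_nonneg β₁, abs_nonneg c₁]
        have h2 := hyp _ hneg.le
        rw [quadFun_real_smul, ← ha₂, ← hβ₂] at h2
        nlinarith [le_abs_self β₂, neg_abs_le β₂, le_abs_self c₂, neg_abs_le c₂,
          mul_le_mul_of_nonneg_left hs3 hspos.le, abs_nonneg β₂, abs_nonneg c₂]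
      · set t : ℂ := z (Sum.inr ()) with htdef
        set y : Fin n → ℂ := t⁻¹ • (z ∘ Sum.inl) with hy
        have hz : z = Sum.elim (t • y) (fun _ => t) := by
          rw [hy, smul_smul, mul_inv_cancel₀ ht, one_smul]
          exact sum_elim_eq z
        have hns : 0 < Complex.normSq t := Complex.normSq_pos.mpr ht
        rw [hz, Q_hermBlock_scaled] at hgz
        rw [hz, Q_hermBlock_scaled]
        have h1 : quadFun A₁ b₁ c₁ y < 0 := by
          by_contra h
          push_neg at h
          nlinarith
        have h2 := hyp y h1.le
        exact mul_nonpos_of_nonneg_of_nonpos hns.le h2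
    -- separation
    set S : Set (ℝ × ℝ) := {p : ℝ × ℝ | ∃ z : Fin n ⊕ Unit → ℂ,
      p = ((Q M₁ z).re, (Q M₂ z).re)} with hSdef
    set T : Set (ℝ × ℝ) := Set.Iio (0:ℝ) ×ˢ Set.Ioi (0:ℝ) with hTdef
    have hSconv : Convex ℝ S := pair_range_convex M₁ M₂ hM₁ hM₂
    have hTconv : Convex ℝ T := (convex_Iio 0).prod (convex_Ioi 0)
    have hTopen : IsOpen T := (isOpen_Iio).prod (isOpen_Ioi)
    have hdisj : Disjoint T S := by
      rw [Set.disjoint_left]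
      rintro p hpT ⟨z, rfl⟩
      obtain ⟨h1, h2⟩ := hpT
      exact absurd (hkey z h1) (not_le.mpr h2)
    obtain ⟨f, u, hfT, hfS⟩ := geometric_hahn_banach_open hTconv hTopen hSconv hdisj
    have h0S : ((0:ℝ), (0:ℝ)) ∈ S := ⟨0, by simp [Q_zero]⟩
    have hu0 : u ≤ 0 := by
      have := hfS _ h0S
      rw [show ((0:ℝ), (0:ℝ)) = (0 : ℝ × ℝ) from rfl, map_zero] at this
      exact this
    set p : ℝ := f (1, 0) with hpd
    set q : ℝ := f (0, 1) with hqd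
    have hf_eval : ∀ v : ℝ × ℝ, f v = v.1 * p + v.2 * q := by
      intro v
      have hv : v = v.1 • ((1:ℝ), (0:ℝ)) + v.2 • ((0:ℝ), (1:ℝ)) := by
        ext <;> simp
      rw [hpd, hqd]
      conv_lhs => rw [hv]
      rw [map_add, ContinuousLinearMap.map_smul, ContinuousLinearMap.map_smul,
        smul_eq_mul, smul_eq_mul]
    have hTneg : ∀ v ∈ T, f v < 0 := fun v hv => lt_of_lt_of_le (hfT v hv) hu0
    have hp : 0 ≤ p := by
      by_contra hcon
      push_neg at hcon
      set δ : ℝ := -p / (2*(|q|+1)) with hδ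
      have hδpos : 0 < δ := by
        apply div_pos (by linarith) (by positivity)
      have hv : ((-1:ℝ), δ) ∈ T := ⟨by norm_num, hδpos⟩
      have hlt := hTneg _ hv
      rw [hf_eval] at hlt
      simp only at hlt
      have h1 : δ * (|q|+1) = -p/2 := by
        rw [hδ]; field_simp
      nlinarith [neg_abs_le q, abs_nonneg q]
    have hq : q ≤ 0 := by
      by_contra hcon
      push_neg at hcon
      set δ : ℝ := q / (2*(|p|+1)) with hδ
      have hδpos : 0 < δ := by
        apply div_pos hcon (by positivity)
      have hv : ((-δ:ℝ), (1:ℝ)) ∈ T := ⟨by simpa using hδpos, by norm_num⟩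
      have hlt := hTneg _ hv
      rw [hf_eval] at hlt
      simp only at hlt
      have h1 : δ * (|p|+1) = q/2 := by
        rw [hδ]; field_simp
      nlinarith [neg_abs_le p, le_abs_self p, abs_nonneg p]
    have hSnn : ∀ z : Fin n ⊕ Unit → ℂ, 0 ≤ p * (Q M₁ z).re + q * (Q M₂ z).re := by
      intro z
      by_contra hcon
      push_neg at hcon
      set w : ℝ := p * (Q M₁ z).re + q * (Q M₂ z).re with hw
      set r : ℝ := u / w + 1 with hr
      have hrpos : 0 < r := by
        have h0 : 0 ≤ u / w := div_nonneg_iff.mpr (Or.inr ⟨hu0, hcon.le⟩)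
        rw [hr]
        linarith
      have hmem : ((r * (Q M₁ z).re, r * (Q M₂ z).re) : ℝ × ℝ) ∈ S := by
        refine ⟨(Complex.ofReal (Real.sqrt r)) • z, ?_⟩
        rw [Q_sqrt_smul M₁ z hrpos.le, Q_sqrt_smul M₂ z hrpos.le]
        simp only [Prod.mk.injEq]
        constructor <;> rw [Complex.re_ofReal_mul]
      have := hfS _ hmem
      rw [hf_eval] at this
      have heval : r * (Q M₁ z).re * p + r * (Q M₂ z).re * q = r * w := by
        rw [hw]
        ring
      have heval2 : r * w = u + w := by
        rw [hr]
        field_simp [hcon.ne]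
      rw [heval, heval2] at this
      linarith
    have hqneg : q < 0 := by
      rcases hq.lt_or_eq with h | h
      · exact h
      · exfalso
        have hppos : 0 < p := by
          have hv : ((-1:ℝ), (1:ℝ)) ∈ T := ⟨by norm_num, by norm_num⟩
          have hlt := hTneg _ hv
          rw [hf_eval] at hlt
          simp only at hlt
          nlinarith
        obtain ⟨x₀, hx₀⟩ := slater
        have hg0 : (Q M₁ (Sum.elim x₀ (fun _ => (1:ℂ)))).re < 0 := by
          rw [hM₁def, Q_hermBlock_one]
          exact hx₀
        have h2 := hSnn (Sum.elim x₀ (fun _ => (1:ℂ)))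
        rw [h, zero_mul, add_zero] at h2
        nlinarith [mul_neg_of_pos_of_neg hppos hg0]
    refine ⟨p / (-q), div_nonneg hp (by linarith),
      posSemidef_iff_dotProduct_mulVec.mpr ⟨hDherm _, ?_⟩⟩
    intro v
    have hform : 0 ≤ (p / (-q)) * (Q M₁ v).re - (Q M₂ v).re := by
      have h1 := hSnn v
      have h2 : (p / (-q)) * (Q M₁ v).re - (Q M₂ v).re
          = (p * (Q M₁ v).re + q * (Q M₂ v).re) / (-q) := by
        field_simp [hqneg.ne]
        ring
      rw [h2]
      apply div_nonneg h1 (by linarith)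
    have hval : star v ⬝ᵥ ((p / (-q)) • M₁ - M₂) *ᵥ v
        = ((((p / (-q)) * (Q M₁ v).re - (Q M₂ v).re : ℝ)) : ℂ) := by
      have h0 : star v ⬝ᵥ ((p / (-q)) • M₁ - M₂) *ᵥ v = Q ((p / (-q)) • M₁ - M₂) v := rfl
      rw [h0, hQD]
      conv_lhs => rw [Q_herm_real hM₁ v, Q_herm_real hM₂ v]
      push_cast
      ring
    rw [hval]
    exact Complex.zero_le_real.mpr hform
  · rintro ⟨α, hα, hPSD⟩ x hx
    set z : Fin n ⊕ Unit → ℂ := Sum.elim x (fun _ => (1:ℂ)) with hz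
    have h0 := hPSD.dotProduct_mulVec_nonneg z
    have hval : star z ⬝ᵥ (α • M₁ - M₂) *ᵥ z = Q (α • M₁ - M₂) z := rfl
    rw [hval, hQD] at h0
    have hre : 0 ≤ (((α:ℝ):ℂ) * Q M₁ z - Q M₂ z).re := by
      rw [Complex.le_def] at h0
      simpa using h0.1
    rw [Complex.sub_re, Complex.re_ofReal_mul] at hre
    have hg : (Q M₁ z).re = quadFun A₁ b₁ c₁ x := by
      rw [hM₁def, hz, Q_hermBlock_one]
    have hf : (Q M₂ z).re = quadFun A₂ b₂ c₂ x := by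
      rw [hM₂def, hz, Q_hermBlock_one]
    rw [hg, hf] at hre
    nlinarith
end

section
/- Let n be a positive natural number, Q a Hermitian positive semidefinite n×n complex matrix, h̄ ∈ ℂⁿ, ε > 0 a real number, and T ∈ ℝ. Then the following are equivalent: (i) for every Δh ∈ ℂⁿ with ∑_i |Δh_i|² ≤ ε², one has Re((h̄ + Δh)ᴴ Q (h̄ + Δh)) ≥ T; (ii) there exists a real number α ≥ 0 such that the (n+1)×(n+1) Hermitian block matrix [[α·I + Q, Q h̄],[(Q h̄)ᴴ, −α·ε² + Re(h̄ᴴ Q h̄) − T]] is positive semidefinite. -/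
open Matrix ComplexOrder

namespace RobustSNR

variable {n : ℕ}

/-! ### Generic helper lemmas -/

lemma dot_self_re (u : Fin n → ℂ) :
    (star u ⬝ᵥ u).re = ∑ i, ‖u i‖ ^ 2 := by
  simp only [dotProduct]
  rw [Complex.re_sum]
  refine Finset.sum_congr rfl fun i _ => ?_
  simp [Pi.star_apply, Complex.star_def, Complex.mul_re, Complex.sq_norm,
    Complex.normSq_apply]

lemma dot_self_im (u : Fin n → ℂ) : (star u ⬝ᵥ u).im = 0 := by
  simp only [dotProduct]
  rw [Complex.im_sum]
  refine Finset.sum_eq_zero fun i _ => ?_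
  simp [Pi.star_apply, Complex.star_def, Complex.mul_im]
  ring

lemma herm_dot {Q : Matrix (Fin n) (Fin n) ℂ} (hQ : Q.IsHermitian)
    (v w : Fin n → ℂ) : star (Q *ᵥ v) ⬝ᵥ w = star v ⬝ᵥ Q *ᵥ w := by
  rw [star_mulVec, hQ.eq, ← dotProduct_mulVec]

lemma herm_conj {Q : Matrix (Fin n) (Fin n) ℂ} (hQ : Q.IsHermitian)
    (v w : Fin n → ℂ) : star w ⬝ᵥ Q *ᵥ v = star (star v ⬝ᵥ Q *ᵥ w) := by
  rw [star_dotProduct, herm_dot hQ]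

lemma herm_im {Q : Matrix (Fin n) (Fin n) ℂ} (hQ : Q.IsHermitian)
    (v : Fin n → ℂ) : (star v ⬝ᵥ Q *ᵥ v).im = 0 := by
  have h := herm_conj hQ v v
  have h' := congrArg Complex.im h
  simp only [Complex.star_def, Complex.conj_im] at h'
  linarith

lemma expand_re {Q : Matrix (Fin n) (Fin n) ℂ} (hQ : Q.IsHermitian)
    (a c : Fin n → ℂ) :
    (star (a + c) ⬝ᵥ Q *ᵥ (a + c)).re
      = (star a ⬝ᵥ Q *ᵥ a).re + 2 * (star c ⬝ᵥ Q *ᵥ a).re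
        + (star c ⬝ᵥ Q *ᵥ c).re := by
  have h1 : star (a + c) ⬝ᵥ Q *ᵥ (a + c)
      = star a ⬝ᵥ Q *ᵥ a + star a ⬝ᵥ Q *ᵥ c + star c ⬝ᵥ Q *ᵥ a + star c ⬝ᵥ Q *ᵥ c := by
    simp only [star_add, add_dotProduct, mulVec_add, dotProduct_add]
    ring
  have h2 : (star a ⬝ᵥ Q *ᵥ c).re = (star c ⬝ᵥ Q *ᵥ a).re := by
    rw [herm_conj hQ c a]
    simp [Complex.star_def]
  rw [h1]
  simp only [Complex.add_re]
  rw [h2]; ring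

lemma star_sum_elim (v : Fin n → ℂ) (w : Unit → ℂ) :
    star (Sum.elim v w) = Sum.elim (star v) (star w) := by
  funext x; cases x <;> rfl

lemma block_eval {P : Matrix (Fin n) (Fin n) ℂ} (hP : P.IsHermitian)
    (b : Fin n → ℂ) (c : ℝ) (v : Fin n → ℂ) (t : ℂ) :
    star (Sum.elim v (fun _ : Unit => t)) ⬝ᵥ
        (fromBlocks P (replicateCol Unit b) (replicateRow Unit (star b))
          (Matrix.of fun _ _ => (c : ℂ))) *ᵥ (Sum.elim v (fun _ : Unit => t))
      = (((star v ⬝ᵥ P *ᵥ v).re + 2 * (t * (star v ⬝ᵥ b)).re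
          + Complex.normSq t * c : ℝ) : ℂ) := by
  rw [fromBlocks_mulVec, star_sum_elim]
  have hinl : (Sum.elim v (fun _ : Unit => t)) ∘ Sum.inl = v := rfl
  have hinr : (Sum.elim v (fun _ : Unit => t)) ∘ Sum.inr = fun _ => t := rfl
  rw [hinl, hinr, sumElim_dotProduct_sumElim]
  have hcol : (replicateCol Unit b) *ᵥ (fun _ : Unit => t) = fun i => b i * t := by
    funext i; simp [mulVec, dotProduct]
  have hrow : (replicateRow Unit (star b)) *ᵥ v = fun _ : Unit => star b ⬝ᵥ v := by
    funext i; rfl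
  have hD : (Matrix.of fun _ _ : Unit => (c : ℂ)) *ᵥ (fun _ : Unit => t)
      = fun _ : Unit => (c : ℂ) * t := by
    funext i; simp [mulVec, dotProduct]
  rw [hcol, hrow, hD]
  have h1 : star v ⬝ᵥ (fun i => b i * t) = t * (star v ⬝ᵥ b) := by
    simp only [dotProduct, Finset.mul_sum]
    exact Finset.sum_congr rfl fun i _ => by ring
  have h2 : star (fun _ : Unit => t) ⬝ᵥ
      ((fun _ : Unit => star b ⬝ᵥ v) + fun _ : Unit => (c : ℂ) * t)
      = star t * (star b ⬝ᵥ v) + star t * ((c : ℂ) * t) := by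
    simp [dotProduct, mul_add]
  rw [dotProduct_add, h1, h2]
  have h3 : star b ⬝ᵥ v = star (star v ⬝ᵥ b) := star_dotProduct _ _
  have h4 : star t * star (star v ⬝ᵥ b) = star (t * (star v ⬝ᵥ b)) := by
    rw [StarMul.star_mul]; ring
  have h5 : star t * ((c : ℂ) * t) = ((Complex.normSq t * c : ℝ) : ℂ) := by
    rw [Complex.star_def]
    push_cast
    rw [← Complex.mul_conj t]
    ring
  rw [h3, h4, h5]
  have hA : (star v ⬝ᵥ P *ᵥ v).im = 0 := herm_im hP v
  apply Complex.ext
  · simp only [Complex.add_re, Complex.ofReal_re, Complex.star_def, Complex.conj_re]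
    ring
  · simp only [Complex.add_im, Complex.ofReal_im, Complex.star_def, Complex.conj_im, hA]
    ring

lemma unit_psd {s : ℝ} (hs : 0 ≤ s) :
    (Matrix.of fun _ _ : Unit => (s : ℂ)).PosSemidef := by
  refine PosSemidef.of_dotProduct_mulVec_nonneg ?_ ?_
  · ext i j
    simp [conjTranspose_apply]
  · intro x
    have hx : star x ⬝ᵥ (Matrix.of fun _ _ : Unit => (s : ℂ)) *ᵥ x
        = ((s * Complex.normSq (x ()) : ℝ) : ℂ) := by
      simp [dotProduct, mulVec, Complex.star_def]
      have : (starRingEnd ℂ) (x PUnit.unit) * (↑s * x PUnit.unit)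
          = ↑s * ((starRingEnd ℂ) (x PUnit.unit) * x PUnit.unit) := by ring
      rw [this, ← Complex.normSq_eq_conj_mul_self]
    rw [hx]
    exact Complex.zero_le_real.mpr (mul_nonneg hs (Complex.normSq_nonneg _))

lemma psd_re_nonneg {Q : Matrix (Fin n) (Fin n) ℂ} (hQ : Q.PosSemidef)
    (v : Fin n → ℂ) : 0 ≤ (star v ⬝ᵥ Q *ᵥ v).re := by
  have := hQ.dotProduct_mulVec_nonneg v
  rw [Complex.le_def] at this
  simpa using this.1

lemma sum_abs_sq_pos {v : Fin n → ℂ} (hv : v ≠ 0) :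
    0 < ∑ i, ‖v i‖ ^ 2 := by
  obtain ⟨i, hi⟩ := Function.ne_iff.mp hv
  refine Finset.sum_pos' (fun j _ => by positivity) ⟨i, Finset.mem_univ i, ?_⟩
  have : ‖v i‖ ≠ 0 := by simpa using hi
  positivity

lemma posdefA {Q : Matrix (Fin n) (Fin n) ℂ} (hQ : Q.PosSemidef) {α : ℝ}
    (hα : 0 < α) : (α • (1 : Matrix (Fin n) (Fin n) ℂ) + Q).PosDef := by
  refine PosDef.of_dotProduct_mulVec_pos ?_ ?_
  · show _ᴴ = _
    rw [conjTranspose_add, conjTranspose_smul, hQ.1.eq]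
    simp
  · intro x hx
    have hmv : (α • (1 : Matrix (Fin n) (Fin n) ℂ) + Q) *ᵥ x = α • x + Q *ᵥ x := by
      rw [add_mulVec, smul_mulVec, one_mulVec]
    rw [hmv, dotProduct_add, dotProduct_smul]
    rw [Complex.lt_def]
    constructor
    · simp only [Complex.add_re, Complex.zero_re]
      have h1 : (α • (star x ⬝ᵥ x)).re = α * (star x ⬝ᵥ x).re := by
        simp [Complex.smul_re]
      rw [h1, dot_self_re]
      have := psd_re_nonneg hQ x
      have hpos := sum_abs_sq_pos hx
      nlinarith
    · simp only [Complex.add_im, Complex.zero_im]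
      have h1 : (α • (star x ⬝ᵥ x)).im = α * (star x ⬝ᵥ x).im := by
        simp [Complex.smul_im]
      have h2 : (star x ⬝ᵥ Q *ᵥ x).im = 0 := herm_im hQ.1 x
      rw [h1, dot_self_im, h2]
      ring

/-! ### The regularized inverse and its properties -/

noncomputable def Amat (Q : Matrix (Fin n) (Fin n) ℂ) (α : ℝ) :
    Matrix (Fin n) (Fin n) ℂ := α • (1 : Matrix (Fin n) (Fin n) ℂ) + Q

noncomputable def uvec (Q : Matrix (Fin n) (Fin n) ℂ) (hbar : Fin n → ℂ) (α : ℝ) :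
    Fin n → ℂ := (Amat Q α)⁻¹ *ᵥ (Q *ᵥ hbar)

noncomputable def phi (Q : Matrix (Fin n) (Fin n) ℂ) (hbar : Fin n → ℂ) (α : ℝ) : ℝ :=
  ∑ i, ‖uvec Q hbar α i‖ ^ 2

lemma phi_nonneg (Q : Matrix (Fin n) (Fin n) ℂ) (hbar : Fin n → ℂ) (α : ℝ) :
    0 ≤ phi Q hbar α :=
  Finset.sum_nonneg fun i _ => by positivity

lemma Amat_posdef {Q : Matrix (Fin n) (Fin n) ℂ} (hQ : Q.PosSemidef) {α : ℝ}
    (hα : 0 < α) : (Amat Q α).PosDef := posdefA hQ hα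

lemma Amat_det_ne {Q : Matrix (Fin n) (Fin n) ℂ} (hQ : Q.PosSemidef) {α : ℝ}
    (hα : 0 < α) : (Amat Q α).det ≠ 0 :=
  (Amat_posdef hQ hα).det_pos.ne'

lemma Au_eq_b {Q : Matrix (Fin n) (Fin n) ℂ} (hQ : Q.PosSemidef) (hbar : Fin n → ℂ)
    {α : ℝ} (hα : 0 < α) : Amat Q α *ᵥ uvec Q hbar α = Q *ᵥ hbar := by
  rw [uvec, mulVec_mulVec, mul_nonsing_inv _ (isUnit_iff_ne_zero.mpr (Amat_det_ne hQ hα)),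
    one_mulVec]

lemma Amat_mulVec (Q : Matrix (Fin n) (Fin n) ℂ) (α : ℝ) (x : Fin n → ℂ) :
    Amat Q α *ᵥ x = α • x + Q *ᵥ x := by
  rw [Amat, add_mulVec, smul_mulVec, one_mulVec]

lemma Qu_eq {Q : Matrix (Fin n) (Fin n) ℂ} (hQ : Q.PosSemidef) (hbar : Fin n → ℂ)
    {α : ℝ} (hα : 0 < α) :
    Q *ᵥ (hbar - uvec Q hbar α) = α • uvec Q hbar α := by
  have h1 : Q *ᵥ uvec Q hbar α = Q *ᵥ hbar - α • uvec Q hbar α := by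
    have := Au_eq_b hQ hbar hα
    rw [Amat_mulVec] at this
    rw [eq_sub_iff_add_eq, add_comm, this]
  rw [mulVec_sub, h1]
  abel

/-- The defect value achieved at `Δh = -u α`. -/
lemma robust_at_u {Q : Matrix (Fin n) (Fin n) ℂ} (hQ : Q.PosSemidef) (hbar : Fin n → ℂ)
    {α : ℝ} (hα : 0 < α) :
    (star (hbar + -uvec Q hbar α) ⬝ᵥ Q *ᵥ (hbar + -uvec Q hbar α)).re
      = α * ((star hbar ⬝ᵥ uvec Q hbar α).re - phi Q hbar α) := by
  have h0 : hbar + -uvec Q hbar α = hbar - uvec Q hbar α := by abel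
  rw [h0, Qu_eq hQ hbar hα]
  rw [dotProduct_smul]
  have h1 : star (hbar - uvec Q hbar α) ⬝ᵥ uvec Q hbar α
      = star hbar ⬝ᵥ uvec Q hbar α - star (uvec Q hbar α) ⬝ᵥ uvec Q hbar α := by
    rw [star_sub, sub_dotProduct]
  rw [h1, Complex.smul_re, Complex.sub_re, phi, ← dot_self_re]
  simp [smul_eq_mul]

/-- Key algebraic identity relating the Schur-complement scalar to the value at `-u`. -/
lemma key_identity {Q : Matrix (Fin n) (Fin n) ℂ} (hQ : Q.PosSemidef) (hbar : Fin n → ℂ)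
    {α : ℝ} (hα : 0 < α) :
    star hbar ⬝ᵥ (Q *ᵥ hbar)
      = α • (star hbar ⬝ᵥ uvec Q hbar α) + star (Q *ᵥ hbar) ⬝ᵥ uvec Q hbar α := by
  conv_lhs => rw [← Au_eq_b hQ hbar hα]
  rw [Amat_mulVec, dotProduct_add, dotProduct_smul, herm_dot hQ.1]

lemma phi_bound {Q : Matrix (Fin n) (Fin n) ℂ} (hQ : Q.PosSemidef) (hbar : Fin n → ℂ)
    {α : ℝ} (hα : 0 < α) :
    α ^ 2 * phi Q hbar α ≤ ∑ i, ‖(Q *ᵥ hbar) i‖ ^ 2 := by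
  set u := uvec Q hbar α with hu
  have hb : Q *ᵥ hbar = α • u + Q *ᵥ u := by
    rw [← Amat_mulVec]; exact (Au_eq_b hQ hbar hα).symm
  have h1 : ∑ i, ‖(Q *ᵥ hbar) i‖ ^ 2 = (star (Q *ᵥ hbar) ⬝ᵥ (Q *ᵥ hbar)).re :=
    (dot_self_re _).symm
  have hone : (1 : Matrix (Fin n) (Fin n) ℂ).IsHermitian := isHermitian_one
  have h2 : (star (Q *ᵥ hbar) ⬝ᵥ (Q *ᵥ hbar)).re
      = (star (α • u) ⬝ᵥ (α • u)).re + 2 * (star (Q *ᵥ u) ⬝ᵥ (α • u)).re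
        + (star (Q *ᵥ u) ⬝ᵥ (Q *ᵥ u)).re := by
    have := expand_re hone (α • u) (Q *ᵥ u)
    rw [one_mulVec, one_mulVec, one_mulVec] at this
    rw [hb, this]
  have h3 : (star (α • u) ⬝ᵥ (α • u)).re = α ^ 2 * phi Q hbar α := by
    have : star (α • u) = α • star u := by
      rw [star_smul, star_trivial]
    rw [this, smul_dotProduct, dotProduct_smul, Complex.smul_re, Complex.smul_re,
      dot_self_re, phi]
    simp only [smul_eq_mul]
    ring
  have h4 : 0 ≤ (star (Q *ᵥ u) ⬝ᵥ (α • u)).re := by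
    rw [dotProduct_smul, Complex.smul_re, herm_dot hQ.1]
    exact mul_nonneg hα.le (psd_re_nonneg hQ u)
  have h5 : 0 ≤ (star (Q *ᵥ u) ⬝ᵥ (Q *ᵥ u)).re := by
    rw [dot_self_re]
    exact Finset.sum_nonneg fun i _ => by positivity
  rw [h1, h2, h3]
  linarith

lemma phi_continuousOn {Q : Matrix (Fin n) (Fin n) ℂ} (hQ : Q.PosSemidef)
    (hbar : Fin n → ℂ) : ContinuousOn (phi Q hbar) (Set.Ioi (0 : ℝ)) := by
  intro α hα
  apply ContinuousAt.continuousWithinAt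
  have h1 : Continuous fun β : ℝ => Amat Q β := by
    apply continuous_matrix
    intro i j
    simp only [Amat, Matrix.add_apply, Matrix.smul_apply]
    exact (continuous_id.smul continuous_const).add continuous_const
  have hdet : ContinuousAt Ring.inverse (Amat Q α).det := by
    have hu : IsUnit ((Amat Q α).det) := isUnit_iff_ne_zero.mpr (Amat_det_ne hQ hα)
    obtain ⟨u, hu⟩ := hu
    rw [← hu]
    exact NormedRing.inverse_continuousAt u
  have h2 : ContinuousAt (fun β : ℝ => (Amat Q β)⁻¹) α :=
    (continuousAt_matrix_inv _ hdet).comp h1.continuousAt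
  have h3 : Continuous fun M : Matrix (Fin n) (Fin n) ℂ =>
      ∑ i, ‖(M *ᵥ (Q *ᵥ hbar)) i‖ ^ 2 := by
    apply continuous_finset_sum
    intro i _
    have : Continuous fun M : Matrix (Fin n) (Fin n) ℂ => (M *ᵥ (Q *ᵥ hbar)) i :=
      (continuous_apply i).comp (continuous_id.matrix_mulVec continuous_const)
    exact (continuous_norm.comp this).pow 2
  exact h3.continuousAt.comp h2

/-! ### Existence of the multiplier (S-procedure, case `T > 0`) -/

lemma exists_phi_eq {Q : Matrix (Fin n) (Fin n) ℂ} (hQ : Q.PosSemidef)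
    (hbar : Fin n → ℂ) {ε T : ℝ} (hε : 0 < ε) (hT : 0 < T)
    (hi : ∀ Δh : Fin n → ℂ, ∑ i, ‖Δh i‖ ^ 2 ≤ ε ^ 2 →
        T ≤ (star (hbar + Δh) ⬝ᵥ Q.mulVec (hbar + Δh)).re) :
    ∃ α : ℝ, 0 < α ∧ phi Q hbar α = ε ^ 2 := by
  have step1 : ∃ α₀ : ℝ, 0 < α₀ ∧ ε ^ 2 ≤ phi Q hbar α₀ := by
    by_contra hcon
    push_neg at hcon
    set K := ∑ i, ‖hbar i‖ with hK
    have hK0 : 0 ≤ K := Finset.sum_nonneg fun i _ => norm_nonneg _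
    set α := T / (ε * K + 1) with hαdef
    have hεK : 0 < ε * K + 1 := by positivity
    have hα : 0 < α := div_pos hT hεK
    have hφ : phi Q hbar α < ε ^ 2 := hcon α hα
    have hui : ∀ i, ‖uvec Q hbar α i‖ ≤ ε := by
      intro i
      have h1 : ‖uvec Q hbar α i‖ ^ 2 ≤ phi Q hbar α :=
        Finset.single_le_sum (f := fun i => ‖uvec Q hbar α i‖ ^ 2)
          (fun j _ => by positivity) (Finset.mem_univ i)
      nlinarith [norm_nonneg (uvec Q hbar α i)]
    have hdotre : (star hbar ⬝ᵥ uvec Q hbar α).re ≤ K * ε := by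
      have h1 : (star hbar ⬝ᵥ uvec Q hbar α).re
          = ∑ i, (star (hbar i) * uvec Q hbar α i).re := by
        simp only [dotProduct, Pi.star_apply]
        rw [Complex.re_sum]
      rw [h1, hK, Finset.sum_mul]
      refine Finset.sum_le_sum fun i _ => ?_
      calc (star (hbar i) * uvec Q hbar α i).re
          ≤ ‖star (hbar i) * uvec Q hbar α i‖ := Complex.re_le_norm _
        _ = ‖hbar i‖ * ‖uvec Q hbar α i‖ := by
            simp [_root_.map_mul, Complex.star_def]
        _ ≤ ‖hbar i‖ * ε :=
            mul_le_mul_of_nonneg_left (hui i) (norm_nonneg _)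
    have hTle : T ≤ α * ((star hbar ⬝ᵥ uvec Q hbar α).re - phi Q hbar α) := by
      rw [← robust_at_u hQ hbar hα]
      apply hi
      calc ∑ i, ‖(-uvec Q hbar α) i‖ ^ 2 = phi Q hbar α := by
            rw [phi]
            exact Finset.sum_congr rfl fun i _ => by simp
        _ ≤ ε ^ 2 := hφ.le
    have hφ0 : 0 ≤ phi Q hbar α := phi_nonneg _ _ _
    have h2 : T ≤ α * (K * ε) := by nlinarith
    rw [hαdef, div_mul_eq_mul_div, le_div_iff₀ hεK] at h2
    nlinarith
  obtain ⟨α₀, hα₀, h₀⟩ := step1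
  set B := ∑ i, ‖(Q *ᵥ hbar) i‖ ^ 2 with hB
  have hB0 : 0 ≤ B := Finset.sum_nonneg fun i _ => by positivity
  set α₁ := max α₀ (Real.sqrt B / ε) with hα₁def
  have hle : α₀ ≤ α₁ := le_max_left _ _
  have hα₁ : 0 < α₁ := lt_of_lt_of_le hα₀ hle
  have h₁ : phi Q hbar α₁ ≤ ε ^ 2 := by
    have hb := phi_bound hQ hbar (α := α₁) hα₁
    have h2 : Real.sqrt B / ε ≤ α₁ := le_max_right _ _
    have h3 : Real.sqrt B ≤ α₁ * ε := by
      rw [div_le_iff₀ hε] at h2; linarith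
    have h4 : B ≤ (α₁ * ε) ^ 2 := by
      have h5 := Real.sq_sqrt hB0
      nlinarith [Real.sqrt_nonneg B]
    have hφ0 : 0 ≤ phi Q hbar α₁ := phi_nonneg _ _ _
    rw [← hB] at hb
    nlinarith [mul_pos hα₁ hα₁]
  have hsub : Set.Icc α₀ α₁ ⊆ Set.Ioi (0 : ℝ) := fun x hx => lt_of_lt_of_le hα₀ hx.1
  have hcont := (phi_continuousOn hQ hbar).mono hsub
  have hmem : ε ^ 2 ∈ Set.Icc (phi Q hbar α₁) (phi Q hbar α₀) := ⟨h₁, h₀⟩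
  obtain ⟨α, hαIcc, hval⟩ := intermediate_value_Icc' hle hcont hmem
  exact ⟨α, lt_of_lt_of_le hα₀ hαIcc.1, hval⟩

/-! ### Schur complement computations -/

lemma schur_entry {Q : Matrix (Fin n) (Fin n) ℂ} (hbar : Fin n → ℂ) (α : ℝ) :
    (replicateCol Unit (Q *ᵥ hbar))ᴴ * (Amat Q α)⁻¹ * replicateCol Unit (Q *ᵥ hbar)
      = Matrix.of fun _ _ : Unit => star (Q *ᵥ hbar) ⬝ᵥ uvec Q hbar α := by
  rw [conjTranspose_replicateCol, ← replicateRow_vecMul, replicateRow_mul_replicateCol, uvec]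
  congr 1
  funext i j
  rw [← dotProduct_mulVec]

lemma psd_block_of_nonpos {Q : Matrix (Fin n) (Fin n) ℂ} (hQ : Q.PosSemidef)
    (hbar : Fin n → ℂ) {c : ℝ} (hc : (star hbar ⬝ᵥ Q *ᵥ hbar).re ≤ c) :
    (fromBlocks Q (replicateCol Unit (Q *ᵥ hbar)) (replicateRow Unit (star (Q *ᵥ hbar)))
      (Matrix.of fun _ _ => (c : ℂ))).PosSemidef := by
  refine PosSemidef.of_dotProduct_mulVec_nonneg ?_ ?_
  · rw [isHermitian_fromBlocks_iff]
    refine ⟨hQ.1, ?_, ?_, ?_⟩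
    · rw [conjTranspose_replicateCol]
    · rw [conjTranspose_replicateRow]; simp
    · ext i j; simp [conjTranspose_apply]
  · intro x
    have hx : x = Sum.elim (x ∘ Sum.inl) (fun _ : Unit => x (Sum.inr ())) := by
      funext y
      cases y with
      | inl a => rfl
      | inr u => cases u; rfl
    rw [hx, block_eval hQ.1]
    set v := x ∘ Sum.inl with hv
    set t := x (Sum.inr ()) with ht
    rw [Complex.zero_le_real]
    have hexp := expand_re hQ.1 v (t • hbar)
    have hcross : (star (t • hbar) ⬝ᵥ Q *ᵥ v).re = (t * (star v ⬝ᵥ Q *ᵥ hbar)).re := by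
      rw [star_smul, smul_dotProduct, herm_conj hQ.1 v hbar]
      rw [smul_eq_mul, mul_comm, ← StarMul.star_mul, Complex.star_def]
      exact Complex.conj_re _
    have hlast : (star (t • hbar) ⬝ᵥ Q *ᵥ (t • hbar)).re
        = Complex.normSq t * (star hbar ⬝ᵥ Q *ᵥ hbar).re := by
      have h1 : star (t • hbar) ⬝ᵥ Q *ᵥ (t • hbar)
          = ((Complex.normSq t : ℝ) : ℂ) * (star hbar ⬝ᵥ Q *ᵥ hbar) := by
        rw [star_smul, smul_dotProduct, mulVec_smul, dotProduct_smul, smul_smul,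
          smul_eq_mul, Complex.star_def, ← Complex.normSq_eq_conj_mul_self]
      rw [h1]
      simp [Complex.mul_re]
    have hpos := psd_re_nonneg hQ (v + t • hbar)
    rw [hexp, hcross, hlast] at hpos
    have hns : 0 ≤ Complex.normSq t := Complex.normSq_nonneg t
    nlinarith

end RobustSNR

open RobustSNR in
/-- LMI reformulation of the robust communication-SNR constraint in Proposition 2 of the
paper (via the S-procedure): for a Hermitian PSD matrix `Q`, estimated channel `h̄`,
error radius `ε > 0`, and threshold `T`, the robust constraint
`(h̄+Δh)ᴴ Q (h̄+Δh) ≥ T` for all `‖Δh‖₂² ≤ ε²` holds iff there is `α ≥ 0` such that the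
block matrix `[[α·I + Q, Q h̄],[(Q h̄)ᴴ, −α·ε² + Re(h̄ᴴ Q h̄) − T]]` is PSD. -/
theorem robust_snr_lmi
    {n : ℕ} (hn : 0 < n) (Q : Matrix (Fin n) (Fin n) ℂ) (hQ : Q.PosSemidef)
    (hbar : Fin n → ℂ) (ε : ℝ) (hε : 0 < ε) (T : ℝ) :
    (∀ Δh : Fin n → ℂ, ∑ i, ‖Δh i‖ ^ 2 ≤ ε ^ 2 →
        T ≤ (star (hbar + Δh) ⬝ᵥ Q.mulVec (hbar + Δh)).re) ↔
      ∃ α : ℝ, 0 ≤ α ∧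
        (Matrix.fromBlocks (α • (1 : Matrix (Fin n) (Fin n) ℂ) + Q)
          (Matrix.replicateCol Unit (Q.mulVec hbar))
          (Matrix.replicateRow Unit (star (Q.mulVec hbar)))
          (Matrix.of fun _ _ =>
            ((-α * ε ^ 2 + (star hbar ⬝ᵥ Q.mulVec hbar).re - T : ℝ) : ℂ))).PosSemidef := by
  constructor
  · intro hi
    rcases le_or_gt T 0 with hT | hT
    · refine ⟨0, le_rfl, ?_⟩
      have h0 : (0 : ℝ) • (1 : Matrix (Fin n) (Fin n) ℂ) + Q = Q := by
        rw [zero_smul, zero_add]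
      have hc : (-(0 : ℝ) * ε ^ 2 + (star hbar ⬝ᵥ Q.mulVec hbar).re - T)
          = ((star hbar ⬝ᵥ Q *ᵥ hbar).re - T) := by ring
      rw [h0, hc]
      exact psd_block_of_nonpos hQ hbar (by linarith)
    · obtain ⟨α, hα, hφ⟩ := exists_phi_eq hQ hbar hε hT hi
      refine ⟨α, hα.le, ?_⟩
      have hAm : α • (1 : Matrix (Fin n) (Fin n) ℂ) + Q = Amat Q α := rfl
      have hrow : replicateRow Unit (star (Q.mulVec hbar)) = (replicateCol Unit (Q.mulVec hbar))ᴴ := by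
        rw [conjTranspose_replicateCol]
      rw [hAm, hrow]
      haveI : Invertible (Amat Q α) :=
        (Amat Q α).invertibleOfIsUnitDet (isUnit_iff_ne_zero.mpr (Amat_det_ne hQ hα))
      rw [PosDef.fromBlocks₁₁ _ _ (Amat_posdef hQ hα)]
      rw [schur_entry hbar α]
      set r := (star (Q *ᵥ hbar) ⬝ᵥ uvec Q hbar α).re with hr
      have hreal : star (Q *ᵥ hbar) ⬝ᵥ uvec Q hbar α = (r : ℂ) := by
        have hpsd := ((Amat_posdef hQ hα).inv).posSemidef.dotProduct_mulVec_nonneg (Q *ᵥ hbar)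
        rw [Complex.le_def] at hpsd
        apply Complex.ext
        · rw [Complex.ofReal_re]
        · rw [Complex.ofReal_im, uvec]
          simpa using hpsd.2.symm
      have hmat : (Matrix.of fun _ _ : Unit =>
            ((-α * ε ^ 2 + (star hbar ⬝ᵥ Q.mulVec hbar).re - T : ℝ) : ℂ))
          - (Matrix.of fun _ _ : Unit => star (Q *ᵥ hbar) ⬝ᵥ uvec Q hbar α)
          = Matrix.of fun _ _ : Unit =>
            ((-α * ε ^ 2 + (star hbar ⬝ᵥ Q.mulVec hbar).re - T - r : ℝ) : ℂ) := by
        ext i j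
        rw [Matrix.sub_apply]
        simp only [Matrix.of_apply]
        rw [hreal]
        push_cast
        ring
      rw [hmat]
      apply unit_psd
      have hT2 : T ≤ α * ((star hbar ⬝ᵥ uvec Q hbar α).re - phi Q hbar α) := by
        rw [← robust_at_u hQ hbar hα]
        apply hi
        calc ∑ i, ‖(-uvec Q hbar α) i‖ ^ 2 = phi Q hbar α := by
              rw [phi]; exact Finset.sum_congr rfl fun i _ => by simp
          _ ≤ ε ^ 2 := hφ.le
      have hkeyre : (star hbar ⬝ᵥ (Q *ᵥ hbar)).re
          = α * (star hbar ⬝ᵥ uvec Q hbar α).re + r := by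
        rw [key_identity hQ hbar hα]
        simp [Complex.add_re, Complex.smul_re, hr]
      rw [hφ] at hT2
      linarith [hT2, hkeyre]
  · rintro ⟨α, hα0, hpsd⟩ Δh hΔ
    have hx := hpsd.dotProduct_mulVec_nonneg (Sum.elim Δh (fun _ : Unit => (1 : ℂ)))
    have hPh : (α • (1 : Matrix (Fin n) (Fin n) ℂ) + Q).IsHermitian := by
      rcases lt_or_eq_of_le hα0 with h | h
      · exact (posdefA hQ h).1
      · rw [← h]; simpa using hQ.1
    rw [block_eval hPh _ _ Δh 1] at hx
    rw [Complex.zero_le_real] at hx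
    have hAter : (star Δh ⬝ᵥ (α • (1 : Matrix (Fin n) (Fin n) ℂ) + Q) *ᵥ Δh).re
        = α * (∑ i, ‖Δh i‖ ^ 2) + (star Δh ⬝ᵥ Q *ᵥ Δh).re := by
      rw [add_mulVec, smul_mulVec, one_mulVec, dotProduct_add, dotProduct_smul,
        Complex.add_re, Complex.smul_re, dot_self_re, smul_eq_mul]
    rw [hAter] at hx
    simp only [one_mul, Complex.normSq_one] at hx
    have hgoal := expand_re hQ.1 hbar Δh
    rw [hgoal]
    have hmul : α * (∑ i, ‖Δh i‖ ^ 2) ≤ α * ε ^ 2 :=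
      mul_le_mul_of_nonneg_left hΔ hα0
    linarith
end

section
/- Let n be a positive natural number, Q a Hermitian positive semidefinite n×n complex matrix, a, ã ∈ ℂⁿ, ε > 0 a real number, and z ∈ ℝ. Then the following are equivalent: (i) for every δ ∈ ℂ with |δ| ≤ ε, one has Re((a + δ·ã)ᴴ Q (a + δ·ã)) ≥ z; (ii) there exists a real number ξ ≥ 0 such that the 2×2 Hermitian matrix [[ξ + ãᴴ Q ã, ãᴴ Q a],[aᴴ Q ã, −ξ·ε² + Re(aᴴ Q a) − z]] is positive semidefinite. -/
open Matrix ComplexOrder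

lemma star_mul_self_eq_abs_sq (w : ℂ) : star w * w = ((‖w‖ ^ 2 : ℝ) : ℂ) := by
  rw [Complex.star_def, ← Complex.normSq_eq_norm_sq, Complex.normSq_eq_conj_mul_self]

lemma psd2 (p q : ℝ) (B : ℂ) (hp : 0 ≤ p) (hq : 0 ≤ q)
    (h : ‖B‖ ^ 2 ≤ p * q) :
    (!![(p:ℂ), B; star B, (q:ℂ)]).PosSemidef := by
  refine Matrix.PosSemidef.of_dotProduct_mulVec_nonneg ?_ ?_
  · ext i j
    fin_cases i <;> fin_cases j <;>
      simp [Matrix.conjTranspose_apply, Complex.conj_ofReal]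
  · intro x
    have hE : star x ⬝ᵥ (!![(p:ℂ), B; star B, (q:ℂ)]) *ᵥ x =
        ((p * ‖(x 0)‖ ^ 2 + q * ‖(x 1)‖ ^ 2
          + 2 * (star (x 0) * x 1 * B).re : ℝ) : ℂ) := by
      have hw : star (x 1) * (star B * x 0) = star (star (x 0) * x 1 * B) := by
        simp; ring
      simp only [dotProduct, Matrix.mulVec, Fin.sum_univ_two, Pi.star_apply,
        Matrix.of_apply, Matrix.cons_val', Matrix.cons_val_zero, Matrix.cons_val_one,
        Matrix.head_cons, Matrix.empty_val', Matrix.cons_val_fin_one, Matrix.head_fin_const]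
      rw [show star (x 0) * ((p:ℂ) * x 0 + B * x 1) + star (x 1) * (star B * x 0 + (q:ℂ) * x 1)
          = (p:ℂ) * (star (x 0) * x 0) + (q:ℂ) * (star (x 1) * x 1)
            + (star (x 0) * x 1 * B + star (x 1) * (star B * x 0)) by ring,
        hw, star_mul_self_eq_abs_sq, star_mul_self_eq_abs_sq, Complex.star_def,
        Complex.add_conj]
      push_cast
      ring
    rw [hE, Complex.zero_le_real]
    set u := ‖(x 0)‖
    set v := ‖(x 1)‖
    have hu : 0 ≤ u := norm_nonneg _
    have hv : 0 ≤ v := norm_nonneg _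
    have hb : 0 ≤ ‖B‖ := norm_nonneg _
    have hr : |(star (x 0) * x 1 * B).re| ≤ u * v * ‖B‖ := by
      calc |(star (x 0) * x 1 * B).re| ≤ ‖(star (x 0) * x 1 * B)‖ :=
            Complex.abs_re_le_norm _
        _ = u * v * ‖B‖ := by
            rw [norm_mul, norm_mul]
            simp [Complex.star_def, u, v]
    have hr' : -(u * v * ‖B‖) ≤ (star (x 0) * x 1 * B).re := by
      linarith [neg_abs_le ((star (x 0) * x 1 * B).re)]
    have hsp := Real.sq_sqrt hp
    have hsq := Real.sq_sqrt hq
    have hbs : ‖B‖ ≤ Real.sqrt p * Real.sqrt q := by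
      rw [← Real.sqrt_mul hp]
      rw [show ‖B‖ = Real.sqrt (‖B‖ ^ 2) by
        rw [Real.sqrt_sq hb]]
      exact Real.sqrt_le_sqrt h
    have key : 2 * (u * v * ‖B‖) ≤ p * u ^ 2 + q * v ^ 2 := by
      nlinarith [sq_nonneg (Real.sqrt p * u - Real.sqrt q * v), mul_nonneg hu hv,
        Real.sqrt_nonneg p, Real.sqrt_nonneg q]
    linarith

/-- LMI reformulation of the robust sensing-numerator constraint in Proposition 7 of the
paper (via the S-procedure): for a Hermitian PSD matrix `Q`, vectors `a, ã`, error
radius `ε > 0`, and level `z`, the robust constraint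
`(a + δ·ã)ᴴ Q (a + δ·ã) ≥ z` for all `|δ| ≤ ε` holds iff there exists `ξ ≥ 0` such that
the 2×2 Hermitian matrix `[[ξ + ãᴴQã, ãᴴQa],[aᴴQã, −ξ·ε² + Re(aᴴQa) − z]]` is PSD. -/
theorem robust_aod_lmi
    {n : ℕ} (hn : 0 < n) (Q : Matrix (Fin n) (Fin n) ℂ) (hQ : Q.PosSemidef)
    (a aTil : Fin n → ℂ) (ε : ℝ) (hε : 0 < ε) (z : ℝ) :
    (∀ δ : ℂ, ‖δ‖ ≤ ε →
        z ≤ (star (a + δ • aTil) ⬝ᵥ Q.mulVec (a + δ • aTil)).re) ↔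
      ∃ ξ : ℝ, 0 ≤ ξ ∧
        (!![(ξ : ℂ) + star aTil ⬝ᵥ Q.mulVec aTil, star aTil ⬝ᵥ Q.mulVec a;
            star a ⬝ᵥ Q.mulVec aTil,
            ((-ξ * ε ^ 2 + (star a ⬝ᵥ Q.mulVec a).re - z : ℝ) : ℂ)]).PosSemidef := by
  set A := star aTil ⬝ᵥ Q.mulVec aTil with hAdef
  set B := star aTil ⬝ᵥ Q.mulVec a with hBdef
  set C := star a ⬝ᵥ Q.mulVec a with hCdef
  have hAnn := hQ.dotProduct_mulVec_nonneg aTil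
  rw [← hAdef, Complex.nonneg_iff] at hAnn
  have hAre : 0 ≤ A.re := hAnn.1
  have hAim : A.im = 0 := hAnn.2.symm
  have hAC : A = ((A.re : ℝ) : ℂ) := Complex.ext (by simp) (by simp [hAim])
  have hBB : star a ⬝ᵥ Q.mulVec aTil = star B := by
    rw [hBdef, star_dotProduct, star_mulVec, ← Matrix.dotProduct_mulVec, hQ.1]
  have hexp : ∀ δ : ℂ, star (a + δ • aTil) ⬝ᵥ Q.mulVec (a + δ • aTil)
      = C + δ * star B + star δ * B + (star δ * δ) * A := by
    intro δ
    simp only [star_add, star_smul, Matrix.mulVec_add, Matrix.mulVec_smul,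
      dotProduct_add, add_dotProduct, smul_dotProduct, dotProduct_smul, smul_eq_mul,
      star_trivial]
    rw [← hAdef, ← hBdef, ← hCdef, hBB]
    ring
  have hre : ∀ δ : ℂ, (star (a + δ • aTil) ⬝ᵥ Q.mulVec (a + δ • aTil)).re
      = C.re + 2 * (star δ * B).re + ‖δ‖ ^ 2 * A.re := by
    intro δ
    rw [hexp δ, star_mul_self_eq_abs_sq δ]
    have h1 : (δ * star B).re = (star δ * B).re := by
      rw [show δ * star B = star (star δ * B) by rw [StarMul.star_mul, star_star]; ring]
      exact Complex.conj_re _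
    simp only [Complex.add_re, h1, Complex.mul_re, Complex.ofReal_re, Complex.ofReal_im,
      zero_mul, sub_zero]
    ring
  obtain ⟨Ar, hArnn, hArA⟩ : ∃ r : ℝ, 0 ≤ r ∧ A = (r : ℂ) := ⟨A.re, hAre, hAC⟩
  have hreA : A.re = Ar := by rw [hArA, Complex.ofReal_re]
  rw [hreA] at hre
  rw [hBB, hArA]
  have hconjB : (starRingEnd ℂ) B * B = ((‖B‖ ^ 2 : ℝ) : ℂ) := by
    rw [← Complex.star_def]; exact star_mul_self_eq_abs_sq B
  constructor
  · -- forward direction: S-procedure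
    intro hrob
    have hz0 : z ≤ C.re := by
      have h0 := hrob 0 (by simpa using hε.le)
      rw [hre 0] at h0
      simpa using h0
    by_cases hcase : ‖B‖ ≤ ε * Ar
    · -- ξ = 0 works
      have hqpq : 0 ≤ C.re - z ∧ ‖B‖ ^ 2 ≤ Ar * (C.re - z) := by
        rcases eq_or_lt_of_le hArnn with hA0 | hApos
        · have hb0 : ‖B‖ = 0 := by
            have := norm_nonneg B
            nlinarith
          constructor
          · linarith
          · rw [hb0, ← hA0]
            simp
        · set b := ‖B‖ with hbdef
          have hδabs : ‖(-(B / (Ar : ℂ)))‖ = b / Ar := by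
            rw [norm_neg, norm_div, Complex.norm_real, Real.norm_eq_abs, abs_of_nonneg hArnn]
          have hδle : ‖(-(B / (Ar : ℂ)))‖ ≤ ε := by
            rw [hδabs, div_le_iff₀ hApos]
            nlinarith
          have h := hrob _ hδle
          rw [hre _] at h
          have e1 : star (-(B / (Ar : ℂ))) * B = ((-(b ^ 2 / Ar) : ℝ) : ℂ) := by
            rw [star_neg, star_div₀, Complex.star_def, Complex.conj_ofReal]
            rw [show -((starRingEnd ℂ) B / (Ar : ℂ)) * B
                = -(((starRingEnd ℂ) B * B) / (Ar : ℂ)) by ring, hconjB]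
            push_cast
            ring
          rw [e1, hδabs, Complex.ofReal_re] at h
          have e3 : (b / Ar) ^ 2 * Ar = b ^ 2 / Ar := by
            field_simp
          rw [e3] at h
          have h' : z ≤ C.re - b ^ 2 / Ar := by linarith
          have hbA : 0 ≤ b ^ 2 / Ar := div_nonneg (sq_nonneg b) hArnn
          constructor
          · linarith
          · have hfin : b ^ 2 / Ar ≤ C.re - z := by linarith
            rw [mul_comm]
            exact (div_le_iff₀ hApos).mp hfin
      refine ⟨0, le_refl 0, ?_⟩
      have hM : (!![((0:ℝ) : ℂ) + (Ar : ℂ), B; star B, ((-(0:ℝ) * ε ^ 2 + C.re - z : ℝ) : ℂ)])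
          = !![((Ar : ℝ) : ℂ), B; star B, ((C.re - z : ℝ) : ℂ)] := by
        ext i j
        fin_cases i <;> fin_cases j <;> simp <;> norm_num
      rw [show ((0:ℝ) : ℂ) + (Ar : ℂ) = ((0:ℝ) : ℂ) + (Ar : ℂ) from rfl, hM]
      exact psd2 Ar (C.re - z) B hArnn hqpq.1 hqpq.2
    · -- boundary case
      push_neg at hcase
      set b := ‖B‖ with hbdef
      have hbpos : 0 < b := lt_of_le_of_lt (mul_nonneg hε.le hArnn) hcase
      have hδabs : ‖(-((ε : ℂ) * B / (b : ℂ)))‖ = ε := by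
        rw [norm_neg, norm_div, norm_mul, Complex.norm_real,
          Complex.norm_real, Real.norm_eq_abs, Real.norm_eq_abs, abs_of_nonneg hε.le, abs_of_nonneg hbpos.le]
        field_simp
        rfl
      have h := hrob _ (le_of_eq hδabs)
      rw [hre _, hδabs] at h
      have e1 : star (-((ε : ℂ) * B / (b : ℂ))) * B = ((-(ε * b) : ℝ) : ℂ) := by
        rw [star_neg, star_div₀, StarMul.star_mul]
        simp only [Complex.star_def, Complex.conj_ofReal]
        rw [show -((starRingEnd ℂ) B * (ε : ℂ) / (b : ℂ)) * B
            = -((ε : ℂ) * (((starRingEnd ℂ) B * B) / (b : ℂ))) by ring, hconjB]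
        push_cast
        rw [show ((ε : ℂ)) * ((b : ℂ) ^ 2 / (b : ℂ)) = (ε : ℂ) * (b : ℂ) *
            ((b : ℂ) / (b : ℂ)) by ring, div_self (by exact_mod_cast hbpos.ne')]
        ring
      rw [e1, Complex.ofReal_re] at h
      set ξ := (C.re - z - ε * b) / ε ^ 2 with hξdef
      have hξnum : 0 ≤ C.re - z - ε * b := by nlinarith
      have hξ0 : 0 ≤ ξ := div_nonneg hξnum (sq_nonneg ε)
      have hξmul : ξ * ε ^ 2 = C.re - z - ε * b :=
        div_mul_cancel₀ _ (by positivity)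
      have hq : 0 ≤ -ξ * ε ^ 2 + C.re - z := by nlinarith
      have hqe : -ξ * ε ^ 2 + C.re - z = ε * b := by linarith
      have hp : 0 ≤ ξ + Ar := add_nonneg hξ0 hArnn
      have hpq : b ^ 2 ≤ (ξ + Ar) * (-ξ * ε ^ 2 + C.re - z) := by
        rw [hqe]
        have hPe : ε * b ≤ (ξ + Ar) * ε ^ 2 := by nlinarith
        nlinarith [mul_le_mul_of_nonneg_right hPe hbpos.le, hε, hbpos]
      refine ⟨ξ, hξ0, ?_⟩
      have hM : (!![(ξ : ℂ) + (Ar : ℂ), B; star B, ((-ξ * ε ^ 2 + C.re - z : ℝ) : ℂ)])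
          = !![((ξ + Ar : ℝ) : ℂ), B; star B, ((-ξ * ε ^ 2 + C.re - z : ℝ) : ℂ)] := by
        ext i j
        fin_cases i <;> fin_cases j <;> simp
      rw [hM]
      exact psd2 (ξ + Ar) (-ξ * ε ^ 2 + C.re - z) B hp hq hpq
  · -- reverse direction
    rintro ⟨ξ, hξ, hM⟩ δ hδ
    have hQF := (Complex.nonneg_iff.mp (hM.dotProduct_mulVec_nonneg ![δ, 1])).1
    have hcalc : star ![δ, (1:ℂ)]
          ⬝ᵥ (!![(ξ : ℂ) + (Ar : ℂ), B; star B, ((-ξ * ε ^ 2 + C.re - z : ℝ) : ℂ)]) *ᵥ ![δ, 1]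
        = ((‖δ‖ ^ 2 : ℝ) : ℂ) * ((ξ : ℂ) + (Ar : ℂ))
          + (star δ * B + star (star δ * B)) + ((-ξ * ε ^ 2 + C.re - z : ℝ) : ℂ) := by
      simp only [dotProduct, Matrix.mulVec, Fin.sum_univ_two, Pi.star_apply,
        Matrix.of_apply, Matrix.cons_val', Matrix.cons_val_zero, Matrix.cons_val_one,
        Matrix.head_cons, Matrix.empty_val', Matrix.cons_val_fin_one, Matrix.head_fin_const,
        star_one]
      rw [show star (star δ * B) = star B * δ by rw [StarMul.star_mul, star_star],
        ← star_mul_self_eq_abs_sq δ]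
      ring
    rw [hcalc] at hQF
    have e : (((‖δ‖ ^ 2 : ℝ) : ℂ) * ((ξ : ℂ) + (Ar : ℂ))
          + (star δ * B + star (star δ * B)) + ((-ξ * ε ^ 2 + C.re - z : ℝ) : ℂ)).re
        = ‖δ‖ ^ 2 * (ξ + Ar) + 2 * (star δ * B).re
          + (-ξ * ε ^ 2 + C.re - z) := by
      simp only [Complex.add_re, Complex.mul_re, Complex.ofReal_re, Complex.ofReal_im,
        Complex.add_im, Complex.star_def, Complex.conj_re, zero_mul, sub_zero]
      ring
    rw [e] at hQF
    rw [hre δ]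
    have hd2 : ‖δ‖ ^ 2 ≤ ε ^ 2 := by
      nlinarith [norm_nonneg δ]
    nlinarith [mul_nonneg hξ (sub_nonneg.mpr hd2)]
end
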